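/- arXiv:1311.4871 — 2 statements merged into one kernel-verified Lean document; each statement's English description precedes it below -/
import Mathlib

section
/- Let P and Q be orthogonal projections on a Hilbert space H. Then the powers (PQ)ⁿ converge in the strong operator topology as n → ∞ to the orthogonal projection P ∧ Q onto ran(P) ∩ ran(Q) (von Neumann's alternating projections theorem). -/
open Filter
open scoped InnerProductSpace

section aux
variable {H : Type*} [NormedAddCommGroup H] [InnerProductSpace ℂ H] [CompleteSpace H]

lemma proj_inner_self {P : H →L[ℂ] H} (hsa : IsSelfAdjoint P) (hidem : P ∘L P = P) (x : H) :
    ⟪P x, x⟫_ℂ = ((‖P x‖ ^ 2 : ℝ) : ℂ) := by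
  have h1 : P (P x) = P x := by
    conv_lhs => rw [← ContinuousLinearMap.comp_apply, hidem]
  calc ⟪P x, x⟫_ℂ = ⟪P (P x), x⟫_ℂ := by rw [h1]
    _ = ⟪P x, P x⟫_ℂ := hsa.isSymmetric (P x) x
    _ = ((‖P x‖ : ℂ)) ^ 2 := inner_self_eq_norm_sq_to_K (P x)
    _ = _ := by push_cast; ring

lemma proj_norm_le {P : H →L[ℂ] H} (hsa : IsSelfAdjoint P) (hidem : P ∘L P = P) (x : H) :
    ‖P x‖ ≤ ‖x‖ := by
  have h : ‖P x‖ ^ 2 = Complex.re ⟪P x, x⟫_ℂ := by rw [proj_inner_self hsa hidem]; norm_cast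
  have h2 : Complex.re ⟪P x, x⟫_ℂ ≤ ‖P x‖ * ‖x‖ := by
    refine le_trans (Complex.re_le_norm _) ?_
    simpa using norm_inner_le_norm (𝕜 := ℂ) (P x) x
  rcases eq_or_lt_of_le (norm_nonneg (P x)) with h0 | h0
  · rw [← h0]; exact norm_nonneg x
  · nlinarith

lemma proj_fix_of_norm_le {P : H →L[ℂ] H} (hsa : IsSelfAdjoint P) (hidem : P ∘L P = P) {x : H}
    (h : ‖x‖ ≤ ‖P x‖) : P x = x := by
  have heq : ‖P x‖ = ‖x‖ := le_antisymm (proj_norm_le hsa hidem x) h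
  have hinner : ⟪x, P x⟫_ℂ = ((‖P x‖ ^ 2 : ℝ) : ℂ) := by
    rw [← inner_conj_symm, proj_inner_self hsa hidem]
    simp
  have hz : ‖x - P x‖ ^ 2 = 0 := by
    rw [@norm_sub_sq ℂ, hinner]
    simp only [RCLike.re_to_complex, Complex.ofReal_re, heq]
    ring
  have h0 : ‖x - P x‖ = 0 := by nlinarith [norm_nonneg (x - P x)]
  have : x - P x = 0 := norm_eq_zero.mp h0
  have := sub_eq_zero.mp this
  exact this.symm

lemma sandwich_sa {P Q : H →L[ℂ] H} (hPsa : IsSelfAdjoint P) (hQsa : IsSelfAdjoint Q) :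
    IsSelfAdjoint (P ∘L Q ∘L P) := by
  rw [ContinuousLinearMap.isSelfAdjoint_iff'] at hPsa hQsa ⊢
  simp only [ContinuousLinearMap.adjoint_comp, hPsa, hQsa]
  exact (ContinuousLinearMap.comp_assoc _ _ _).symm

lemma alt_cauchy {P Q : H →L[ℂ] H}
    (hPsa : IsSelfAdjoint P) (hPidem : P ∘L P = P)
    (hQsa : IsSelfAdjoint Q) (hQidem : Q ∘L Q = Q) (x : H) :
    CauchySeq (fun n : ℕ => (((P ∘L Q ∘L P)) ^ n) x) := by
  set A : H →L[ℂ] H := P ∘L Q ∘L P with hA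
  have hAsa : IsSelfAdjoint A := sandwich_sa hPsa hQsa
  have hAapp : ∀ y : H, A y = P (Q (P y)) := fun y => rfl
  have hPle : ∀ y : H, ‖P y‖ ≤ ‖y‖ := proj_norm_le hPsa hPidem
  have hQle : ∀ y : H, ‖Q y‖ ≤ ‖y‖ := proj_norm_le hQsa hQidem
  set w : ℕ → H := fun k => if Even k then (A ^ (k/2)) x else Q (P ((A ^ (k/2)) x)) with hw
  set c : ℕ → ℝ := fun k => ‖w k‖ ^ 2 with hcdef
  have hwe : ∀ j : ℕ, w (2*j) = (A ^ j) x := by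
    intro j
    have : Even (2*j) := even_two_mul j
    simp only [hw, if_pos this]
    norm_num
  have hwo : ∀ j : ℕ, w (2*j+1) = Q (P ((A ^ j) x)) := by
    intro j
    have : ¬ Even (2*j+1) := by simp [Nat.even_add_one, Nat.even_mul]
    have h2 : (2*j+1)/2 = j := by omega
    simp only [hw, if_neg this, h2]
  have hstep : ∀ k, ‖w (k+1)‖ ≤ ‖w k‖ := by
    intro k
    rcases Nat.even_or_odd k with ⟨j, hj⟩ | ⟨j, hj⟩
    · have hk : k = 2*j := by omega
      subst hk
      rw [hwe j, hwo j]
      exact le_trans (hQle _) (hPle _)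
    · subst hj
      have h1 : 2*j+1+1 = 2*(j+1) := by ring
      rw [hwo j, h1, hwe (j+1), pow_succ']
      rw [ContinuousLinearMap.mul_apply, hAapp]
      exact hPle _
  have hwnorm : Antitone fun k => ‖w k‖ := antitone_nat_of_succ_le hstep
  have hantit : Antitone c := fun a b hab => by
    exact pow_le_pow_left₀ (norm_nonneg _) (hwnorm hab) 2
  have hc : ∀ k, ⟪((A ^ k) x), x⟫_ℂ = ((c k : ℝ) : ℂ) := by
    intro k
    rcases Nat.even_or_odd k with ⟨j, hj⟩ | ⟨j, hj⟩
    · have hk : k = 2*j := by omega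
      subst hk
      have hp : (A ^ (2*j) : H →L[ℂ] H) = A ^ j * A ^ j := by rw [← pow_add]; ring_nf
      have hs : ⟪(A ^ j) ((A ^ j) x), x⟫_ℂ = ⟪(A ^ j) x, (A ^ j) x⟫_ℂ :=
        (hAsa.pow j).isSymmetric _ _
      rw [hp, ContinuousLinearMap.mul_apply, hs, inner_self_eq_norm_sq_to_K, hcdef]
      simp only [hwe j]
      norm_cast
    · subst hj
      have hp : (A ^ (2*j+1) : H →L[ℂ] H) = A ^ j * (A * A ^ j) := by
        rw [← pow_succ']
        rw [← pow_add]
        ring_nf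
      have hs : ⟪(A ^ j) ((A * A ^ j) x), x⟫_ℂ = ⟪(A * A ^ j) x, (A ^ j) x⟫_ℂ :=
        (hAsa.pow j).isSymmetric _ _
      rw [hp, ContinuousLinearMap.mul_apply, hs]
      rw [ContinuousLinearMap.mul_apply, hAapp]
      rw [show ⟪P (Q (P ((A ^ j) x))), (A ^ j) x⟫_ℂ = ⟪Q (P ((A ^ j) x)), P ((A ^ j) x)⟫_ℂ
        from hPsa.isSymmetric _ _]
      rw [proj_inner_self hQsa hQidem]
      rw [hcdef]
      simp only [hwo j]
  have hre : ∀ m n : ℕ, Complex.re ⟪((A ^ n) x), ((A ^ m) x)⟫_ℂ = c (n + m) := by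
    intro m n
    have h1 : ⟪((A ^ m) ((A ^ n) x)), x⟫_ℂ = ⟪((A ^ n) x), ((A ^ m) x)⟫_ℂ :=
      (hAsa.pow m).isSymmetric _ _
    rw [← h1]
    have h2 : (A ^ m) ((A ^ n) x) = (A ^ (n + m)) x := by
      rw [← ContinuousLinearMap.mul_apply, ← pow_add]
      ring_nf
    rw [h2, hc (n + m)]
    simp
  have hdist : ∀ m n : ℕ, dist ((A ^ n) x) ((A ^ m) x) ^ 2 ≤ |c (2*n) - c (2*m)| := by
    intro m n
    have hnormsq : dist ((A ^ n) x) ((A ^ m) x) ^ 2 = c (2*n) - 2 * c (n + m) + c (2*m) := by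
      rw [dist_eq_norm, @norm_sub_sq ℂ]
      have e1 : ‖(A ^ n) x‖ ^ 2 = c (2*n) := by rw [hcdef]; simp only [hwe n]
      have e2 : ‖(A ^ m) x‖ ^ 2 = c (2*m) := by rw [hcdef]; simp only [hwe m]
      rw [e1, e2]
      have := hre m n
      simp only [RCLike.re_to_complex] at this ⊢
      rw [this]
    have hmin : min (c (2*n)) (c (2*m)) ≤ c (n + m) := by
      rcases le_total n m with h | h
      · exact le_trans (min_le_right _ _) (hantit (by omega))
      · exact le_trans (min_le_left _ _) (hantit (by omega))
    rw [hnormsq]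
    rcases le_total (c (2*n)) (c (2*m)) with h | h
    · rw [abs_sub_comm, abs_of_nonneg (by linarith)]
      have := min_eq_left h ▸ hmin
      linarith [min_eq_left h, hmin]
    · rw [abs_of_nonneg (by linarith)]
      linarith [min_eq_right h, hmin]
  -- c (2n) is a Cauchy sequence of reals
  have hbdd : BddBelow (Set.range c) := ⟨0, fun y ⟨k, hk⟩ => hk ▸ sq_nonneg _⟩
  have htend : Tendsto c atTop (nhds (⨅ k, c k)) := tendsto_atTop_ciInf hantit hbdd
  have h2n : Tendsto (fun n : ℕ => 2*n) atTop atTop :=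
    tendsto_atTop_atTop_of_monotone (fun a b h => by omega) (fun b => ⟨b, by omega⟩)
  have hc2 : CauchySeq (fun n : ℕ => c (2*n)) := (htend.comp h2n).cauchySeq
  rw [Metric.cauchySeq_iff]
  intro ε hε
  obtain ⟨N, hN⟩ := Metric.cauchySeq_iff.mp hc2 (ε ^ 2) (by positivity)
  refine ⟨N, fun n hn m hm => ?_⟩
  have h1 := hdist m n
  have h2 := hN n hn m hm
  rw [Real.dist_eq] at h2
  have h3 : dist ((A ^ n) x) ((A ^ m) x) ^ 2 < ε ^ 2 := lt_of_le_of_lt h1 h2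
  exact lt_of_pow_lt_pow_left₀ 2 (le_of_lt hε) h3

end aux

/-- Von Neumann's alternating projections theorem: for orthogonal projections `P`, `Q`
on a Hilbert space, the powers `(PQ)ⁿ` converge in the strong operator topology to the
orthogonal projection onto `ran(P) ∩ ran(Q)`. -/
theorem alternating_projections {H : Type*} [NormedAddCommGroup H]
    [InnerProductSpace ℂ H] [CompleteSpace H]
    (P Q : H →L[ℂ] H)
    (hPsa : IsSelfAdjoint P) (hPidem : P ∘L P = P)
    (hQsa : IsSelfAdjoint Q) (hQidem : Q ∘L Q = Q) :
    ∃ R : H →L[ℂ] H, IsSelfAdjoint R ∧ R ∘L R = R ∧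
      LinearMap.range (R : H →ₗ[ℂ] H) = LinearMap.range (P : H →ₗ[ℂ] H) ⊓ LinearMap.range (Q : H →ₗ[ℂ] H) ∧
      ∀ x : H, Tendsto (fun n : ℕ => ((P ∘L Q) ^ n) x) atTop (nhds (R x)) := by
  set A : H →L[ℂ] H := P ∘L Q ∘L P with hA
  have hAsa : IsSelfAdjoint A := sandwich_sa hPsa hQsa
  have hAapp : ∀ y : H, A y = P (Q (P y)) := fun y => rfl
  have hPle : ∀ y : H, ‖P y‖ ≤ ‖y‖ := proj_norm_le hPsa hPidem
  have hQle : ∀ y : H, ‖Q y‖ ≤ ‖y‖ := proj_norm_le hQsa hQidem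
  have hP2 : ∀ y : H, P (P y) = P y := fun y => by
    conv_lhs => rw [← ContinuousLinearMap.comp_apply, hPidem]
  have hQ2 : ∀ y : H, Q (Q y) = Q y := fun y => by
    conv_lhs => rw [← ContinuousLinearMap.comp_apply, hQidem]
  have hAle : ∀ (n : ℕ) (y : H), ‖(A ^ n) y‖ ≤ ‖y‖ := by
    intro n
    induction n with
    | zero => intro y; simp
    | succ n ih =>
      intro y
      have : (A ^ (n+1)) y = (A ^ n) (A y) := by
        rw [pow_succ, ContinuousLinearMap.mul_apply]
      rw [this]
      refine le_trans (ih (A y)) ?_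
      rw [hAapp]
      exact le_trans (hPle _) (le_trans (hQle _) (hPle _))
  have key : ∀ x : H, ∃ y, Tendsto (fun n : ℕ => ((A ^ n)) x) atTop (nhds y) := fun x =>
    cauchySeq_tendsto_of_complete (alt_cauchy hPsa hPidem hQsa hQidem x)
  choose f hf using key
  have hadd : ∀ x y : H, f (x + y) = f x + f y := by
    intro x y
    refine tendsto_nhds_unique (hf (x + y)) ?_
    have : (fun n : ℕ => (A ^ n) (x + y)) = fun n : ℕ => (A ^ n) x + (A ^ n) y := by
      funext n; rw [map_add]
    rw [this]
    exact (hf x).add (hf y)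
  have hsmul : ∀ (a : ℂ) (x : H), f (a • x) = a • f x := by
    intro a x
    refine tendsto_nhds_unique (hf (a • x)) ?_
    have : (fun n : ℕ => (A ^ n) (a • x)) = fun n : ℕ => a • (A ^ n) x := by
      funext n; rw [map_smul]
    rw [this]
    exact (hf x).const_smul a
  set R : H →L[ℂ] H := LinearMap.mkContinuous
    { toFun := f
      map_add' := hadd
      map_smul' := hsmul } 1
    (fun x => by
      rw [one_mul]
      exact le_of_tendsto' (hf x).norm (fun n => hAle n x)) with hR
  have hRapp : ∀ x : H, R x = f x := fun x => rfl
  have hfR : ∀ x : H, Tendsto (fun n : ℕ => (A ^ n) x) atTop (nhds (R x)) := by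
    intro x; rw [hRapp]; exact hf x
  have hAfix : ∀ y : H, A y = y → ∀ n : ℕ, (A ^ n) y = y := by
    intro y hy n
    induction n with
    | zero => simp
    | succ n ih => rw [pow_succ, ContinuousLinearMap.mul_apply, hy, ih]
  have hRA : ∀ x : H, A (R x) = R x := by
    intro x
    have h1 : Tendsto (fun n : ℕ => A ((A ^ n) x)) atTop (nhds (A (R x))) :=
      (A.continuous.tendsto _).comp (hfR x)
    have h2 : (fun n : ℕ => A ((A ^ n) x)) = fun n : ℕ => (A ^ (n + 1)) x := by
      funext n; rw [pow_succ', ContinuousLinearMap.mul_apply]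
    have h3 : Tendsto (fun n : ℕ => (A ^ (n + 1)) x) atTop (nhds (R x)) :=
      (tendsto_add_atTop_iff_nat 1).2 (hfR x)
    exact tendsto_nhds_unique (h2 ▸ h1) h3
  have hfixR : ∀ y : H, A y = y → R y = y := by
    intro y hy
    refine tendsto_nhds_unique (hfR y) ?_
    have : (fun n : ℕ => (A ^ n) y) = fun _ : ℕ => y := funext (hAfix y hy)
    rw [this]
    exact tendsto_const_nhds
  have hPQfix : ∀ y : H, A y = y → P y = y ∧ Q y = y := by
    intro y hy
    rw [hAapp] at hy
    have h1 : ‖y‖ ≤ ‖Q (P y)‖ := by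
      conv_lhs => rw [← hy]
      exact hPle _
    have h1b : ‖y‖ ≤ ‖P y‖ := le_trans h1 (hQle (P y))
    have hP : P y = y := proj_fix_of_norm_le hPsa hPidem h1b
    have h3 : ‖y‖ ≤ ‖Q y‖ := by
      conv_rhs => rw [← hP]
      exact h1
    exact ⟨hP, proj_fix_of_norm_le hQsa hQidem h3⟩
  have hPR : ∀ x : H, P (R x) = R x := fun x => (hPQfix _ (hRA x)).1
  have hQR : ∀ x : H, Q (R x) = R x := fun x => (hPQfix _ (hRA x)).2
  have hRsa : IsSelfAdjoint R := by
    rw [ContinuousLinearMap.isSelfAdjoint_iff_isSymmetric]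
    intro u v
    have h1 : Tendsto (fun n : ℕ => ⟪(A ^ n) u, v⟫_ℂ) atTop (nhds ⟪R u, v⟫_ℂ) :=
      (hfR u).inner tendsto_const_nhds
    have h2 : (fun n : ℕ => ⟪(A ^ n) u, v⟫_ℂ) = fun n : ℕ => ⟪u, (A ^ n) v⟫_ℂ := by
      funext n
      exact (hAsa.pow n).isSymmetric u v
    have h3 : Tendsto (fun n : ℕ => ⟪u, (A ^ n) v⟫_ℂ) atTop (nhds ⟪u, R v⟫_ℂ) :=
      tendsto_const_nhds.inner (hfR v)
    exact tendsto_nhds_unique (h2 ▸ h1) h3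
  have hRR : R ∘L R = R := by
    ext x
    exact hfixR (R x) (hRA x)
  have hrange : LinearMap.range (R : H →ₗ[ℂ] H) = LinearMap.range (P : H →ₗ[ℂ] H) ⊓ LinearMap.range (Q : H →ₗ[ℂ] H) := by
    apply le_antisymm
    · rintro y ⟨x, rfl⟩
      exact Submodule.mem_inf.mpr ⟨⟨R x, hPR x⟩, ⟨R x, hQR x⟩⟩
    · intro y hy
      obtain ⟨⟨u, hu⟩, ⟨v, hv⟩⟩ := Submodule.mem_inf.mp hy
      have hPy : P y = y := by rw [← hu, ContinuousLinearMap.coe_coe, hP2]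
      have hQy : Q y = y := by rw [← hv, ContinuousLinearMap.coe_coe, hQ2]
      have hAy : A y = y := by rw [hAapp, hPy, hQy, hPy]
      exact ⟨y, hfixR y hAy⟩
  refine ⟨R, hRsa, hRR, hrange, ?_⟩
  intro x
  have hcomp : ∀ n : ℕ, ((P ∘L Q) ^ (n + 1)) = (A ^ n) ∘L (P ∘L Q) := by
    intro n
    induction n with
    | zero =>
      rw [pow_one, pow_zero, ContinuousLinearMap.one_def, ContinuousLinearMap.id_comp]
    | succ n ih =>
      rw [pow_succ, ih, pow_succ]
      ext z
      simp only [ContinuousLinearMap.mul_apply, ContinuousLinearMap.comp_apply, hAapp, hP2]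
  have hPRc : P * R = R := ContinuousLinearMap.ext fun z => hPR z
  have hQRc : Q * R = R := ContinuousLinearMap.ext fun z => hQR z
  have hRP : R * P = R := by
    have h := congrArg star hPRc
    rwa [star_mul, hPsa.star_eq, hRsa.star_eq] at h
  have hRQ : R * Q = R := by
    have h := congrArg star hQRc
    rwa [star_mul, hQsa.star_eq, hRsa.star_eq] at h
  have hRPQ : R (P (Q x)) = R x := by
    have e1 : R (P (Q x)) = (R * P) (Q x) := rfl
    rw [e1, hRP]
    have e2 : R (Q x) = (R * Q) x := rfl
    rw [e2, hRQ]
  have h4 : Tendsto (fun n : ℕ => ((P ∘L Q) ^ (n + 1)) x) atTop (nhds (R x)) := by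
    have h5 : (fun n : ℕ => ((P ∘L Q) ^ (n + 1)) x) = fun n : ℕ => (A ^ n) (P (Q x)) := by
      funext n
      rw [hcomp n]
      rfl
    rw [h5, ← hRPQ]
    exact hfR (P (Q x))
  exact (tendsto_add_atTop_iff_nat 1).1 h4
end

section
/- Let M be a martingale (a family (M_t) of bounded operators with E_s M_t E_s = M_s E_s = E_s M_s for s ≤ t, where (E_t) is an increasing family of projections) converging strongly to M_∞. Let T be a discrete quantum stopping time with support {t_1 < ⋯ < t_n}, i.e., mutually orthogonal projections T_1, …, T_n summing to I with T_i commuting with E_{t_j} and E_{t_i} T_i = T_i E_{t_i}, and set E_T := Σ_i T_i E_{t_i}. Then Σ_{i,j} T_i E_{t_i} M_{t_i ∨ t_j} E_{t_j} T_j = E_T M_t E_T for all t ≥ t_n. -/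
open Filter

/-- Discrete vacuum-adapted stopping of a closed martingale: if `M` is a martingale
(w.r.t. an increasing family of projections `E_r` with `E_r E_s = E_{r∧s}`) converging
strongly to `M_∞`, and `T` is a discrete quantum stopping time with support
`{t_1 < ⋯ < t_n}` given by mutually orthogonal projections `T_i` summing to `I` and
commuting with every `E_r`, then, with `E_T := Σ_i T_i E_{t_i}`,
`Σ_{i,j} T_i E_{t_i} M_{t_i ∨ t_j} E_{t_j} T_j = E_T M_u E_T` for every `u ≥ t_n`. -/
theorem discrete_stopping_closed_martingale {H : Type*} [NormedAddCommGroup H]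
    [InnerProductSpace ℂ H] [CompleteSpace H] {n : ℕ} (hn : 1 ≤ n)
    (E : ℝ → H →L[ℂ] H)
    (hEsa : ∀ r, IsSelfAdjoint (E r)) (hEidem : ∀ r, E r ∘L E r = E r)
    (hEmin : ∀ r s : ℝ, E r ∘L E s = E (min r s))
    (M : ℝ → H →L[ℂ] H) (Minf : H →L[ℂ] H)
    (hmg : ∀ s t : ℝ, s ≤ t →
      E s ∘L M t ∘L E s = M s ∘L E s ∧ M s ∘L E s = E s ∘L M s)
    (hMinf : ∀ x : H, Tendsto (fun t : ℝ => M t x) atTop (nhds (Minf x)))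
    (t : Fin n → ℝ) (ht0 : ∀ i, 0 ≤ t i) (ht : StrictMono t)
    (T : Fin n → H →L[ℂ] H)
    (hTsa : ∀ i, IsSelfAdjoint (T i)) (hTidem : ∀ i, T i ∘L T i = T i)
    (hTorth : ∀ i j, i ≠ j → T i ∘L T j = 0)
    (hTsum : ∑ i, T i = 1)
    (hTE : ∀ i (r : ℝ), T i ∘L E r = E r ∘L T i)
    (u : ℝ) (hu : ∀ i, t i ≤ u) :
    ∑ i, ∑ j, T i ∘L E (t i) ∘L M (max (t i) (t j)) ∘L E (t j) ∘L T j =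
      (∑ i, T i ∘L E (t i)) ∘L M u ∘L (∑ j, T j ∘L E (t j)) := by
  simp only [← ContinuousLinearMap.mul_def] at *
  have key : ∀ i j : Fin n, E (t i) * M (max (t i) (t j)) * E (t j)
      = E (t i) * M u * E (t j) := by
    intro i j
    set v := max (t i) (t j) with hv
    have hvu : v ≤ u := max_le (hu i) (hu j)
    have h1 : E (t i) * E v = E (t i) := by
      rw [hEmin, min_eq_left (le_max_left _ _)]
    have h2 : E v * E (t j) = E (t j) := by
      rw [hEmin, min_eq_right (le_max_right _ _)]
    have hm : E v * (M u * E v) = M v * E v := (hmg v u hvu).1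
    calc E (t i) * M v * E (t j) = E (t i) * (M v * E v * E (t j)) := by
          rw [mul_assoc (M v), h2, mul_assoc]
      _ = E (t i) * (E v * (M u * E v) * E (t j)) := by rw [hm]
      _ = E (t i) * E v * (M u * (E v * E (t j))) := by
          simp only [mul_assoc]
      _ = E (t i) * M u * E (t j) := by rw [h1, h2, mul_assoc]
  rw [Finset.sum_mul]
  refine Finset.sum_congr rfl fun i _ => ?_
  rw [Finset.mul_sum, Finset.mul_sum]
  refine Finset.sum_congr rfl fun j _ => ?_
  rw [hTE j]
  calc T i * (E (t i) * (M (max (t i) (t j)) * (E (t j) * T j)))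
      = T i * (E (t i) * M (max (t i) (t j)) * E (t j)) * T j := by
        simp only [mul_assoc]
    _ = T i * (E (t i) * M u * E (t j)) * T j := by rw [key i j]
    _ = T i * E (t i) * (M u * (E (t j) * T j)) := by simp only [mul_assoc]
end
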